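/- Every element α ∈ F'_n which is multilinear in x_1,…,x_n and alternating under permutations of x_1,…,x_n (i.e. α ∈ H'_n) satisfies δα = 0 in F'_{n+1}. -/

import Mathlib

open TensorProduct Finset

section PolyFam
variable {k : Type*} [Field k] [CharZero k] {V : Type*} [AddCommGroup V] [Module k V]

/-- Uniqueness of polynomial coefficients valued in a vector space over a char-zero field. -/
theorem poly_coeff_zero {N : ℕ} {c : ℕ → V}
    (h : ∀ t : k, ∑ d ∈ range N, t ^ d • c d = 0) : ∀ d < N, c d = 0 := by
  intro d hd
  rw [← Module.forall_dual_apply_eq_zero_iff k]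
  intro φ
  have hp : (∑ e ∈ range N, Polynomial.C (φ (c e)) * Polynomial.X ^ e) = (0 : Polynomial k) := by
    apply Polynomial.funext
    intro r
    simp only [Polynomial.eval_finset_sum, Polynomial.eval_mul, Polynomial.eval_C,
      Polynomial.eval_pow, Polynomial.eval_X, Polynomial.eval_zero]
    have := congrArg φ (h r)
    simpa [map_sum, mul_comm] using this
  have := congrArg (fun p => Polynomial.coeff p d) hp
  simpa [Polynomial.finset_sum_coeff, Polynomial.coeff_C_mul, Polynomial.coeff_X_pow,
    Finset.sum_ite_eq' (range N) d, hd] using this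

theorem poly_coeff_ext {N : ℕ} {c c' : ℕ → V}
    (h : ∀ t : k, ∑ d ∈ range N, t ^ d • c d = ∑ d ∈ range N, t ^ d • c' d) :
    ∀ d < N, c d = c' d := by
  intro d hd
  have := poly_coeff_zero (c := fun d => c d - c' d) (k := k) (N := N) (fun t => by
    simp only [smul_sub, Finset.sum_sub_distrib, h t, sub_self]) d hd
  exact sub_eq_zero.mp this

/-- A family `φ : k → V` is polynomial with coefficients `c` vanishing from `N` on. -/
def IsPolyFam (N : ℕ) (c : ℕ → V) (φ : k → V) : Prop :=
  (∀ d, N ≤ d → c d = 0) ∧ ∀ t, φ t = ∑ d ∈ range N, t ^ d • c d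

def HasPolyFam (φ : k → V) : Prop := ∃ N c, IsPolyFam N c φ

theorem IsPolyFam.pad {N M : ℕ} {c : ℕ → V} {φ : k → V} (h : IsPolyFam N c φ) (hNM : N ≤ M) :
    IsPolyFam M c φ := by
  refine ⟨fun d hd => h.1 d (le_trans hNM hd), fun t => ?_⟩
  rw [h.2 t]
  refine Finset.sum_subset (Finset.range_subset_range.mpr hNM) (fun d _ hd => ?_)
  rw [h.1 d (by simpa using hd), smul_zero]

theorem hasPolyFam_const (v : V) : HasPolyFam (k := k) (fun _ => v) := by
  refine ⟨1, fun d => if d = 0 then v else 0, fun d hd => ?_, fun t => by simp⟩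
  dsimp only
  rw [if_neg (by omega)]

theorem hasPolyFam_linear (v : V) : HasPolyFam (fun t : k => t • v) := by
  refine ⟨2, fun d => if d = 1 then v else 0, fun d hd => ?_, fun t => ?_⟩
  · dsimp only; rw [if_neg (by omega)]
  · simp [Finset.sum_range_succ]

theorem HasPolyFam.add {φ ψ : k → V} (hφ : HasPolyFam φ) (hψ : HasPolyFam ψ) :
    HasPolyFam (fun t => φ t + ψ t) := by
  obtain ⟨N, c, hc⟩ := hφ
  obtain ⟨M, c', hc'⟩ := hψ
  have h1 := hc.pad (le_max_left N M)
  have h2 := hc'.pad (le_max_right N M)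
  refine ⟨max N M, fun d => c d + c' d, fun d hd => ?_, fun t => ?_⟩
  · dsimp only; rw [h1.1 d hd, h2.1 d hd, add_zero]
  · dsimp only
    simp [h1.2 t, h2.2 t, Finset.sum_add_distrib, smul_add]

theorem HasPolyFam.smul {φ : k → V} (a : k) (hφ : HasPolyFam φ) :
    HasPolyFam (fun t => a • φ t) := by
  obtain ⟨N, c, hc⟩ := hφ
  refine ⟨N, fun d => a • c d, fun d hd => ?_, fun t => ?_⟩
  · dsimp only; rw [hc.1 d hd, smul_zero]
  · dsimp only
    rw [hc.2 t, Finset.smul_sum]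
    exact Finset.sum_congr rfl fun d _ => smul_comm _ _ _

theorem HasPolyFam.bilin {W U : Type*} [AddCommGroup W] [Module k W]
    [AddCommGroup U] [Module k U] (B : V →ₗ[k] W →ₗ[k] U) {φ : k → V} {ψ : k → W}
    (hφ : HasPolyFam φ) (hψ : HasPolyFam ψ) : HasPolyFam (fun t => B (φ t) (ψ t)) := by
  obtain ⟨N, c, hc⟩ := hφ
  obtain ⟨M, c', hc'⟩ := hψ
  refine ⟨N + M, fun m => ∑ d ∈ range N, ∑ e ∈ range M,
    if d + e = m then B (c d) (c' e) else 0, fun m hm => ?_, fun t => ?_⟩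
  · refine Finset.sum_eq_zero fun d hd => Finset.sum_eq_zero fun e he => ?_
    rw [if_neg]
    simp only [Finset.mem_range] at hd he
    omega
  · dsimp only
    rw [hc.2 t, hc'.2 t]
    have hL : (B (∑ d ∈ range N, t ^ d • c d)) (∑ e ∈ range M, t ^ e • c' e)
        = ∑ e ∈ range M, ∑ d ∈ range N, t ^ (d + e) • (B (c d)) (c' e) := by
      rw [map_sum]
      refine Finset.sum_congr rfl fun e _ => ?_
      rw [map_smul, map_sum, LinearMap.sum_apply, Finset.smul_sum]
      refine Finset.sum_congr rfl fun d _ => ?_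
      rw [map_smul, LinearMap.smul_apply, pow_add, mul_comm, mul_smul]
    have key : ∀ m, t ^ m • (∑ d ∈ range N, ∑ e ∈ range M,
        if d + e = m then (B (c d)) (c' e) else 0) =
        ∑ d ∈ range N, ∑ e ∈ range M,
          (if d + e = m then t ^ (d + e) • (B (c d)) (c' e) else 0) := by
      intro m
      rw [Finset.smul_sum]
      refine Finset.sum_congr rfl fun d _ => ?_
      rw [Finset.smul_sum]
      refine Finset.sum_congr rfl fun e _ => ?_
      split
      · next h => rw [h]
      · rw [smul_zero]
    have hR : ∑ m ∈ range (N + M), t ^ m • (∑ d ∈ range N, ∑ e ∈ range M,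
        if d + e = m then (B (c d)) (c' e) else 0)
        = ∑ d ∈ range N, ∑ e ∈ range M, t ^ (d + e) • (B (c d)) (c' e) := by
      rw [Finset.sum_congr rfl fun m _ => key m, Finset.sum_comm]
      refine Finset.sum_congr rfl fun d hd => ?_
      rw [Finset.sum_comm]
      refine Finset.sum_congr rfl fun e he => ?_
      rw [Finset.sum_ite_eq, if_pos]
      simp only [Finset.mem_range] at hd he ⊢
      omega
    exact hL.trans (Finset.sum_comm.trans hR.symm)

end PolyFam


/-- The subspace of `L ⊗[k] L` spanned by the elements `a⊗b − b⊗a` and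
`a⊗[b,c] − [a,b]⊗c`. -/
def Frel (k L : Type*) [Field k] [LieRing L] [LieAlgebra k L] :
    Submodule k (L ⊗[k] L) :=
  Submodule.span k
    ({x | ∃ a b : L, x = a ⊗ₜ[k] b - b ⊗ₜ[k] a} ∪
     {x | ∃ a b c : L, x = a ⊗ₜ[k] ⁅b, c⁆ - ⁅a, b⁆ ⊗ₜ[k] c})

/-- `F(L)`, the quotient of `L ⊗[k] L` by the relations. -/
abbrev FF (k L : Type*) [Field k] [LieRing L] [LieAlgebra k L] :=
  (L ⊗[k] L) ⧸ Frel k L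

/-- `⟨a, b⟩`, the class of `a ⊗ b` in `F(L)`. -/
noncomputable def pair {k L : Type*} [Field k] [LieRing L] [LieAlgebra k L] (a b : L) :
    FF k L :=
  Submodule.Quotient.mk (a ⊗ₜ[k] b)
theorem Frel_map_le {k L L' : Type*} [Field k] [LieRing L] [LieAlgebra k L]
    [LieRing L'] [LieAlgebra k L'] (f : L →ₗ⁅k⁆ L') :
    (Frel k L).map (TensorProduct.map f.toLinearMap f.toLinearMap) ≤ Frel k L' := by
  rw [Frel, Submodule.map_span, Submodule.span_le]
  rintro _ ⟨x, hx, rfl⟩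
  apply Submodule.subset_span
  rcases hx with ⟨a, b, rfl⟩ | ⟨a, b, c, rfl⟩
  · exact Or.inl ⟨f a, f b, by simp⟩
  · exact Or.inr ⟨f a, f b, f c, by simp⟩

/-- The linear map `F(f) : F(L) → F(L')` induced by a Lie algebra homomorphism `f`;
it satisfies `F(f)⟨a,b⟩ = ⟨f a, f b⟩`. -/
noncomputable def Fmap {k L L' : Type*} [Field k] [LieRing L] [LieAlgebra k L]
    [LieRing L'] [LieAlgebra k L'] (f : L →ₗ⁅k⁆ L') : FF k L →ₗ[k] FF k L' :=
  Submodule.mapQ (Frel k L) (Frel k L') (TensorProduct.map f.toLinearMap f.toLinearMap)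
    (Submodule.map_le_iff_le_comap.mp (Frel_map_le f))

theorem Fmap_pair {k L L' : Type*} [Field k] [LieRing L] [LieAlgebra k L]
    [LieRing L'] [LieAlgebra k L'] (f : L →ₗ⁅k⁆ L') (a b : L) :
    Fmap f (pair a b) = pair (f a) (f b) := by
  simp [Fmap, pair, Submodule.mapQ_apply]

/-- `L_n`, the free Lie algebra on generators `x_1, …, x_n` (the generator `j : Fin n`
corresponds to `x_{j+1}`). -/
abbrev Ln (k : Type*) [Field k] (n : ℕ) := FreeLieAlgebra k (Fin n)

/-- The value of the coface map `δ_i : L_n → L_{n+1}` on the generator `x_{j+1}`: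
`x_m ↦ x_m` for `m < i`, `x_i ↦ x_i + x_{i+1}`, and `x_m ↦ x_{m+1}` for `m > i`
(with `m = j+1`, 1-based indexing). -/
noncomputable def cofaceGen (k : Type*) [Field k] (n : ℕ) (i : Fin (n + 2)) (j : Fin n) :
    Ln k (n + 1) :=
  if (j : ℕ) + 1 < (i : ℕ) then FreeLieAlgebra.of k j.castSucc
  else if (j : ℕ) + 1 = (i : ℕ) then
    FreeLieAlgebra.of k j.castSucc + FreeLieAlgebra.of k j.succ
  else FreeLieAlgebra.of k j.succ

/-- The coface map `δ_i : L_n → L_{n+1}` as a Lie algebra homomorphism. -/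
noncomputable def coface (k : Type*) [Field k] (n : ℕ) (i : Fin (n + 2)) :
    Ln k n →ₗ⁅k⁆ Ln k (n + 1) :=
  FreeLieAlgebra.lift k (cofaceGen k n i)

/-- The cosimplicial differential `δ = Σ_{i=0}^{n+1} (−1)^i F(δ_i) : F_n → F_{n+1}`. -/
noncomputable def cosimp (k : Type*) [Field k] (n : ℕ) :
    FF k (Ln k n) →ₗ[k] FF k (Ln k (n + 1)) :=
  ∑ i : Fin (n + 2), ((-1 : k) ^ (i : ℕ)) • Fmap (coface k n i)

/-- `L'_n`, the free Lie algebra on the `n+1` generators `y, x_1, …, x_n`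
(the generator `none` is `y`, and `some j : Option (Fin n)` corresponds to `x_{j+1}`). -/
abbrev Lp (k : Type*) [Field k] (n : ℕ) := FreeLieAlgebra k (Option (Fin n))

/-- The value of the coface map `δ_i : L'_n → L'_{n+1}` on generators: it fixes `y` and
acts on the `x`-generators by `x_m ↦ x_m` for `m < i`, `x_i ↦ x_i + x_{i+1}`, and
`x_m ↦ x_{m+1}` for `m > i` (1-based indexing, `m = j+1`). -/
noncomputable def cofaceGenP (k : Type*) [Field k] (n : ℕ) (i : Fin (n + 2)) :
    Option (Fin n) → Lp k (n + 1)
  | none => FreeLieAlgebra.of k (none : Option (Fin (n + 1)))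
  | some j =>
    if (j : ℕ) + 1 < (i : ℕ) then FreeLieAlgebra.of k (some j.castSucc)
    else if (j : ℕ) + 1 = (i : ℕ) then
      FreeLieAlgebra.of k (some j.castSucc) + FreeLieAlgebra.of k (some j.succ)
    else FreeLieAlgebra.of k (some j.succ)

/-- The coface map `δ_i : L'_n → L'_{n+1}` as a Lie algebra homomorphism. -/
noncomputable def cofaceP (k : Type*) [Field k] (n : ℕ) (i : Fin (n + 2)) :
    Lp k n →ₗ⁅k⁆ Lp k (n + 1) :=
  FreeLieAlgebra.lift k (cofaceGenP k n i)

/-- The cosimplicial differential `δ = Σ_{i=0}^{n+1} (−1)^i F(δ_i) : F'_n → F'_{n+1}`. -/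
noncomputable def cosimpP (k : Type*) [Field k] (n : ℕ) :
    FF k (Lp k n) →ₗ[k] FF k (Lp k (n + 1)) :=
  ∑ i : Fin (n + 2), ((-1 : k) ^ (i : ℕ)) • Fmap (cofaceP k n i)

/-- The Lie algebra endomorphism of `L'_n` fixing `y`, rescaling the generator
`x_{i+1}` by `t` and fixing the other `x`-generators. -/
noncomputable def scaleHomP (k : Type*) [Field k] (n : ℕ) (i : Fin n) (t : k) :
    Lp k n →ₗ⁅k⁆ Lp k n :=
  FreeLieAlgebra.lift k
    (fun o => match o with
      | none => FreeLieAlgebra.of k (none : Option (Fin n))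
      | some j =>
        if j = i then t • FreeLieAlgebra.of k (some j) else FreeLieAlgebra.of k (some j))

/-- The Lie algebra endomorphism of `L'_n` fixing `y` and permuting the `x`-generators,
`x_i ↦ x_{π(i)}`. -/
noncomputable def permHomP (k : Type*) [Field k] (n : ℕ) (π : Equiv.Perm (Fin n)) :
    Lp k n →ₗ⁅k⁆ Lp k n :=
  FreeLieAlgebra.lift k (fun o => FreeLieAlgebra.of k (o.map π))

/-- `H'_n ⊆ F'_n`: the subspace of elements that are multilinear in the `x`-generators
and alternating under permutations of the `x`-generators. -/
noncomputable def HsubP (k : Type*) [Field k] (n : ℕ) : Submodule k (FF k (Lp k n)) :=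
  (⨅ i : Fin n, ⨅ t : k,
      LinearMap.ker (Fmap (scaleHomP k n i t)
        - t • (LinearMap.id : FF k (Lp k n) →ₗ[k] FF k (Lp k n)))) ⊓
  (⨅ π : Equiv.Perm (Fin n),
      LinearMap.ker (Fmap (permHomP k n π)
        - ((Equiv.Perm.sign π : ℤ) : k)
            • (LinearMap.id : FF k (Lp k n) →ₗ[k] FF k (Lp k n))))

section Scale
variable (k : Type*) [Field k] [CharZero k]

theorem scaleHomP_of_none (m : ℕ) (i : Fin m) (t : k) :
    scaleHomP k m i t (FreeLieAlgebra.of k (none : Option (Fin m))) =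
      FreeLieAlgebra.of k (none : Option (Fin m)) := by
  simp [scaleHomP, FreeLieAlgebra.lift_of_apply]

theorem scaleHomP_of_some (m : ℕ) (i : Fin m) (t : k) (j : Fin m) :
    scaleHomP k m i t (FreeLieAlgebra.of k (some j)) =
      if j = i then t • FreeLieAlgebra.of k (some j) else FreeLieAlgebra.of k (some j) := by
  simp [scaleHomP, FreeLieAlgebra.lift_of_apply]

theorem scale_poly (m : ℕ) (i : Fin m) (v : Lp k m) :
    HasPolyFam (fun t : k => scaleHomP k m i t v) := by
  let S : LieSubalgebra k (Lp k m) :=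
    { carrier := {v | HasPolyFam (fun t : k => scaleHomP k m i t v)}
      add_mem' := fun {a b} ha hb => by
        have := HasPolyFam.add ha hb
        simpa [map_add] using this
      zero_mem' := by
        simpa using hasPolyFam_const (k := k) (0 : Lp k m)
      smul_mem' := fun a v hv => by
        have := HasPolyFam.smul a hv
        simpa [map_smul] using this
      lie_mem' := fun {a b} ha hb => by
        have := HasPolyFam.bilin
          (LinearMap.mk₂ k (fun x y : Lp k m => ⁅x, y⁆) add_lie smul_lie lie_add lie_smul)
          ha hb
        simpa using this }
  have hgen : ∀ o : Option (Fin m), FreeLieAlgebra.of k o ∈ S := by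
    intro o
    show HasPolyFam _
    match o with
    | none =>
      simp only [scaleHomP_of_none]
      exact hasPolyFam_const _
    | some j =>
      simp only [scaleHomP_of_some]
      by_cases h : j = i
      · simp only [if_pos h]
        exact hasPolyFam_linear _
      · simp only [if_neg h]
        exact hasPolyFam_const _
  let f : Lp k m →ₗ⁅k⁆ S := FreeLieAlgebra.lift k (fun o => ⟨FreeLieAlgebra.of k o, hgen o⟩)
  have hcomp : S.incl.comp f = LieHom.id := by
    apply FreeLieAlgebra.hom_ext
    intro o
    simp [f, FreeLieAlgebra.lift_of_apply]
  have hv : v = S.incl (f v) := by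
    have := congrArg (fun g : Lp k m →ₗ⁅k⁆ Lp k m => g v) hcomp
    simpa using this.symm
  rw [show v = ((f v : S) : Lp k m) from hv]
  exact (f v).2

/-- abbreviation for the induced map on tensor squares -/
noncomputable def tmap {m m' : ℕ} (f : Lp k m →ₗ⁅k⁆ Lp k m') :
    (Lp k m ⊗[k] Lp k m) →ₗ[k] (Lp k m' ⊗[k] Lp k m') :=
  TensorProduct.map f.toLinearMap f.toLinearMap

theorem tmap_comp {m m' m'' : ℕ} (g : Lp k m' →ₗ⁅k⁆ Lp k m'') (f : Lp k m →ₗ⁅k⁆ Lp k m')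
    (z : Lp k m ⊗[k] Lp k m) : tmap k g (tmap k f z) = tmap k (g.comp f) z := by
  have : tmap k (g.comp f) = (tmap k g).comp (tmap k f) := TensorProduct.map_comp _ _ _ _
  rw [this]; rfl

theorem Fmap_mk {m m' : ℕ} (f : Lp k m →ₗ⁅k⁆ Lp k m') (z : Lp k m ⊗[k] Lp k m) :
    Fmap f (Submodule.Quotient.mk z) = Submodule.Quotient.mk (tmap k f z) :=
  Submodule.mapQ_apply _ _ _ z

theorem scale_tensor_poly (m : ℕ) (i : Fin m) (z : Lp k m ⊗[k] Lp k m) :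
    HasPolyFam (fun t : k => tmap k (scaleHomP k m i t) z) := by
  induction z using TensorProduct.induction_on with
  | zero => simpa using hasPolyFam_const (k := k) (0 : Lp k m ⊗[k] Lp k m)
  | tmul a b =>
    simp only [tmap, TensorProduct.map_tmul]
    exact HasPolyFam.bilin (TensorProduct.mk k _ _) (scale_poly k m i a) (scale_poly k m i b)
  | add x y hx hy =>
    simp only [map_add]
    exact hx.add hy

end Scale


section HomIds
variable (k : Type*) [Field k] [CharZero k]

/-- `τ_m : L'_n → L'_{n+1}`, fixing `y`, `x_j ↦ x_j` for `j ≤ m`, `x_j ↦ x_{j+1}` for `j > m`. -/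
noncomputable def tauP (n m : ℕ) : Lp k n →ₗ⁅k⁆ Lp k (n + 1) :=
  FreeLieAlgebra.lift k (fun o => match o with
    | none => FreeLieAlgebra.of k (none : Option (Fin (n + 1)))
    | some j => if (j : ℕ) + 1 ≤ m then FreeLieAlgebra.of k (some j.castSucc)
        else FreeLieAlgebra.of k (some j.succ))

theorem cofaceP_of (n : ℕ) (i : Fin (n + 2)) (o : Option (Fin n)) :
    cofaceP k n i (FreeLieAlgebra.of k o) = cofaceGenP k n i o :=
  FreeLieAlgebra.lift_of_apply _ _

theorem tauP_of_none (n m : ℕ) :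
    tauP k n m (FreeLieAlgebra.of k (none : Option (Fin n))) =
      FreeLieAlgebra.of k (none : Option (Fin (n + 1))) :=
  FreeLieAlgebra.lift_of_apply _ _

theorem tauP_of_some (n m : ℕ) (j : Fin n) :
    tauP k n m (FreeLieAlgebra.of k (some j)) =
      (if (j : ℕ) + 1 ≤ m then FreeLieAlgebra.of k (some j.castSucc)
        else FreeLieAlgebra.of k (some j.succ)) :=
  FreeLieAlgebra.lift_of_apply _ _

theorem scale_mul (m : ℕ) (i : Fin m) (s t : k) :
    (scaleHomP k m i s).comp (scaleHomP k m i t) = scaleHomP k m i (s * t) := by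
  apply FreeLieAlgebra.hom_ext
  intro o
  cases o with
  | none => simp [LieHom.comp_apply, scaleHomP_of_none]
  | some j =>
    simp only [LieHom.comp_apply, scaleHomP_of_some]
    split_ifs with h
    · rw [map_smul, scaleHomP_of_some, if_pos h, smul_smul, mul_comm]
    · rw [scaleHomP_of_some, if_neg h]

theorem scale_one (m : ℕ) (i : Fin m) :
    scaleHomP k m i (1 : k) = LieHom.id := by
  apply FreeLieAlgebra.hom_ext
  intro o
  cases o with
  | none => simp [scaleHomP_of_none]
  | some j =>
    rw [scaleHomP_of_some]
    split_ifs <;> simp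

theorem tmap_id (m : ℕ) (z : Lp k m ⊗[k] Lp k m) : tmap k (LieHom.id) z = z := by
  have : tmap k (LieHom.id : Lp k m →ₗ⁅k⁆ Lp k m) = LinearMap.id := by
    rw [tmap, show (LieHom.id : Lp k m →ₗ⁅k⁆ Lp k m).toLinearMap = LinearMap.id from rfl,
      TensorProduct.map_id]
  rw [this, LinearMap.id_apply]

theorem scale_swap_mul (m : ℕ) (a b : Fin m) (hab : a ≠ b) (s t : k) :
    ((scaleHomP k m b t).comp (scaleHomP k m a s)).comp (scaleHomP k m b s) =
      (scaleHomP k m a s).comp (scaleHomP k m b (s * t)) := by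
  apply FreeLieAlgebra.hom_ext
  intro o
  cases o with
  | none => simp [LieHom.comp_apply, scaleHomP_of_none]
  | some j =>
    simp only [LieHom.comp_apply, scaleHomP_of_some]
    by_cases hb : j = b <;> by_cases ha : j = a
    · exact absurd (ha ▸ hb ▸ rfl : a = b) hab
    all_goals simp [hb, ha, map_smul, scaleHomP_of_some, smul_smul, mul_comm,
      hab, Ne.symm hab]


theorem coface_zero (n : ℕ) : cofaceP k n 0 = tauP k n 0 := by
  apply FreeLieAlgebra.hom_ext
  intro o
  cases o with
  | none => simp [cofaceP_of, cofaceGenP, tauP_of_none]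
  | some j =>
    rw [cofaceP_of, tauP_of_some]
    simp only [cofaceGenP]
    rw [if_neg (by simp), if_neg (by simp), if_neg (by simp)]

theorem coface_last (n : ℕ) : cofaceP k n (Fin.last (n + 1)) = tauP k n n := by
  apply FreeLieAlgebra.hom_ext
  intro o
  cases o with
  | none => simp [cofaceP_of, cofaceGenP, tauP_of_none]
  | some j =>
    rw [cofaceP_of, tauP_of_some]
    simp only [cofaceGenP, Fin.val_last]
    rw [if_pos (by omega), if_pos (by omega)]

theorem theta_coface (n : ℕ) (i : ℕ) (h1 : 1 ≤ i) (h2 : i ≤ n) :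
    (scaleHomP k (n + 1) ⟨i, by omega⟩ 0).comp (cofaceP k n ⟨i, by omega⟩) = tauP k n i := by
  apply FreeLieAlgebra.hom_ext
  intro o
  cases o with
  | none => simp [LieHom.comp_apply, cofaceP_of, cofaceGenP, tauP_of_none, scaleHomP_of_none]
  | some j =>
    simp only [LieHom.comp_apply, cofaceP_of, cofaceGenP, tauP_of_some]
    rcases Nat.lt_trichotomy ((j : ℕ) + 1) i with hc | hc | hc
    · have n1 : ¬((j : ℕ) + 1 = i) := by omega
      have g1 : j.castSucc ≠ (⟨i, by omega⟩ : Fin (n + 1)) := by simp [Fin.ext_iff]; omega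
      have hle : (j : ℕ) + 1 ≤ i := by omega
      simp [hc, n1, g1, hle, scaleHomP_of_some]
    · have n1 : ¬((j : ℕ) + 1 < i) := by omega
      have g1 : j.castSucc ≠ (⟨i, by omega⟩ : Fin (n + 1)) := by simp [Fin.ext_iff]; omega
      have g2 : j.succ = (⟨i, by omega⟩ : Fin (n + 1)) := by simp [Fin.ext_iff]; omega
      have hle : (j : ℕ) + 1 ≤ i := by omega
      simp [hc, n1, g1, g2, hle, map_add, map_smul, scaleHomP_of_some]
    · have n1 : ¬((j : ℕ) + 1 < i) := by omega
      have n2 : ¬((j : ℕ) + 1 = i) := by omega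
      have g3 : j.succ ≠ (⟨i, by omega⟩ : Fin (n + 1)) := by simp [Fin.ext_iff]; omega
      have nle : ¬((j : ℕ) + 1 ≤ i) := by omega
      simp [n1, n2, g3, nle, scaleHomP_of_some]

theorem psi_coface (n : ℕ) (i : ℕ) (h1 : 1 ≤ i) (h2 : i ≤ n) :
    (scaleHomP k (n + 1) ⟨i - 1, by omega⟩ 0).comp (cofaceP k n ⟨i, by omega⟩) =
      tauP k n (i - 1) := by
  apply FreeLieAlgebra.hom_ext
  intro o
  cases o with
  | none => simp [LieHom.comp_apply, cofaceP_of, cofaceGenP, tauP_of_none, scaleHomP_of_none]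
  | some j =>
    simp only [LieHom.comp_apply, cofaceP_of, cofaceGenP, tauP_of_some]
    rcases Nat.lt_trichotomy ((j : ℕ) + 1) i with hc | hc | hc
    · have n1 : ¬((j : ℕ) + 1 = i) := by omega
      have g1 : j.castSucc ≠ (⟨i - 1, by omega⟩ : Fin (n + 1)) := by simp [Fin.ext_iff]; omega
      have hle : (j : ℕ) + 1 ≤ i - 1 := by omega
      simp [hc, n1, g1, hle, scaleHomP_of_some]
    · have n1 : ¬((j : ℕ) + 1 < i) := by omega
      have g1 : j.castSucc = (⟨i - 1, by omega⟩ : Fin (n + 1)) := by simp [Fin.ext_iff]; omega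
      have g2 : j.succ ≠ (⟨i - 1, by omega⟩ : Fin (n + 1)) := by simp [Fin.ext_iff]; omega
      have nle : ¬((j : ℕ) + 1 ≤ i - 1) := by omega
      have nle2 : ¬(i ≤ i - 1) := by omega
      simp [hc, n1, g1, g2, nle, nle2, map_add, map_smul, scaleHomP_of_some]
    · have n1 : ¬((j : ℕ) + 1 < i) := by omega
      have n2 : ¬((j : ℕ) + 1 = i) := by omega
      have g3 : j.succ ≠ (⟨i - 1, by omega⟩ : Fin (n + 1)) := by simp [Fin.ext_iff]; omega
      have nle : ¬((j : ℕ) + 1 ≤ i - 1) := by omega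
      simp [n1, n2, g3, nle, scaleHomP_of_some]

theorem diag_coface (n : ℕ) (i : ℕ) (h1 : 1 ≤ i) (h2 : i ≤ n) (t : k) :
    ((scaleHomP k (n + 1) ⟨i - 1, by omega⟩ t).comp
      (scaleHomP k (n + 1) ⟨i, by omega⟩ t)).comp (cofaceP k n ⟨i, by omega⟩) =
    (cofaceP k n ⟨i, by omega⟩).comp (scaleHomP k n ⟨i - 1, by omega⟩ t) := by
  apply FreeLieAlgebra.hom_ext
  intro o
  cases o with
  | none => simp [LieHom.comp_apply, cofaceP_of, cofaceGenP, scaleHomP_of_none]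
  | some j =>
    simp only [LieHom.comp_apply, cofaceP_of, scaleHomP_of_some, cofaceGenP]
    rcases Nat.lt_trichotomy ((j : ℕ) + 1) i with hc | hc | hc
    · have n1 : ¬((j : ℕ) + 1 = i) := by omega
      have g1 : j.castSucc ≠ (⟨i, by omega⟩ : Fin (n + 1)) := by simp [Fin.ext_iff]; omega
      have g2 : j.castSucc ≠ (⟨i - 1, by omega⟩ : Fin (n + 1)) := by simp [Fin.ext_iff]; omega
      have g3 : j ≠ (⟨i - 1, by omega⟩ : Fin n) := by simp [Fin.ext_iff]; omega
      simp [hc, n1, g1, g2, g3, cofaceP_of, cofaceGenP, scaleHomP_of_some]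
    · have n1 : ¬((j : ℕ) + 1 < i) := by omega
      have g1 : j.castSucc ≠ (⟨i, by omega⟩ : Fin (n + 1)) := by simp [Fin.ext_iff]; omega
      have g2 : j.succ = (⟨i, by omega⟩ : Fin (n + 1)) := by simp [Fin.ext_iff]; omega
      have g4 : ((⟨i, by omega⟩ : Fin (n + 1)) : Fin (n+1)) ≠ ⟨i - 1, by omega⟩ := by
        simp [Fin.ext_iff]; omega
      have g5 : j.castSucc = (⟨i - 1, by omega⟩ : Fin (n + 1)) := by simp [Fin.ext_iff]; omega
      have g6 : ((⟨i - 1, by omega⟩ : Fin (n + 1)) : Fin (n+1)) ≠ ⟨i, by omega⟩ := by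
        simp [Fin.ext_iff]; omega
      have g7 : j = (⟨i - 1, by omega⟩ : Fin n) := by simp [Fin.ext_iff]; omega
      have a2 : i - 1 + 1 = i := by omega
      simp [hc, n1, g1, g2, g4, g5, g6, g7, a2, cofaceP_of, cofaceGenP, map_add,
        map_smul, scaleHomP_of_some, smul_add]
    · have n1 : ¬((j : ℕ) + 1 < i) := by omega
      have n2 : ¬((j : ℕ) + 1 = i) := by omega
      have g1 : j.succ ≠ (⟨i, by omega⟩ : Fin (n + 1)) := by simp [Fin.ext_iff]; omega
      have g2 : j.succ ≠ (⟨i - 1, by omega⟩ : Fin (n + 1)) := by simp [Fin.ext_iff]; omega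
      have g3 : j ≠ (⟨i - 1, by omega⟩ : Fin n) := by simp [Fin.ext_iff]; omega
      simp [n1, n2, g1, g2, g3, cofaceP_of, cofaceGenP, scaleHomP_of_some]

end HomIds


section Key
variable {k : Type*} [Field k] [CharZero k]

theorem eval_zero_sum {V : Type*} [AddCommGroup V] [Module k V] {N : ℕ} (hN : 1 ≤ N)
    (g : ℕ → V) : ∑ d ∈ range N, (0 : k) ^ d • g d = g 0 := by
  rw [Finset.sum_eq_single_of_mem 0 (by simp; omega)]
  · simp
  · intro x _ hx
    rw [zero_pow hx, zero_smul]

theorem mk_sum_smul {L : Type*} [LieRing L] [LieAlgebra k L] (N : ℕ) (c : ℕ → L ⊗[k] L)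
    (t : k) : (Submodule.Quotient.mk (∑ d ∈ range N, t ^ d • c d) : FF k L) =
      ∑ d ∈ range N, t ^ d • (Submodule.Quotient.mk (c d) : FF k L) := by
  rw [← Submodule.mkQ_apply, map_sum]
  simp [Submodule.mkQ_apply]

theorem key_split (n : ℕ) (i : ℕ) (h1 : 1 ≤ i) (h2 : i ≤ n) (α : FF k (Lp k n))
    (hm : ∀ t : k, Fmap (scaleHomP k n ⟨i - 1, by omega⟩ t) α = t • α) :
    Fmap (cofaceP k n ⟨i, by omega⟩) α =
      Fmap (tauP k n (i - 1)) α + Fmap (tauP k n i) α := by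
  obtain ⟨z, rfl⟩ := Submodule.Quotient.mk_surjective _ α
  obtain ⟨N0, c, hcP⟩ := scale_tensor_poly k n (⟨i - 1, by omega⟩ : Fin n) z
  obtain ⟨N, hNge, hNpad⟩ : ∃ N, 2 ≤ N ∧ N0 ≤ N := ⟨max N0 2, le_max_right _ _, le_max_left _ _⟩
  have hN2 : 2 ≤ N := hNge
  have hpad : IsPolyFam N c (fun t : k => tmap k (scaleHomP k n (⟨i - 1, by omega⟩ : Fin n) t) z) :=
    hcP.pad hNpad
  have hq : ∀ t : k, ∑ d ∈ range N, t ^ d •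
      (Submodule.Quotient.mk (c d) : FF k (Lp k n)) =
      t • (Submodule.Quotient.mk z : FF k (Lp k n)) := by
    intro t
    rw [← mk_sum_smul]
    have h3 := hpad.2 t
    dsimp only at h3
    rw [← h3, ← Fmap_mk, hm t]
  have hcoef : ∀ d < N, (Submodule.Quotient.mk (c d) : FF k (Lp k n)) =
      (if d = 1 then Submodule.Quotient.mk z else 0) := by
    apply poly_coeff_ext (k := k)
    intro t
    rw [hq t]
    have h4 : ∀ d ∈ range N, t ^ d •
        (if d = 1 then (Submodule.Quotient.mk z : FF k (Lp k n)) else 0) =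
        (if d = 1 then t ^ d • (Submodule.Quotient.mk z : FF k (Lp k n)) else 0) := by
      intro d _
      split <;> simp
    rw [Finset.sum_congr rfl h4, Finset.sum_ite_eq', if_pos (by simp only [Finset.mem_range]; omega), pow_one]
  have hz1 : (Submodule.Quotient.mk (c 1) : FF k (Lp k n)) = Submodule.Quotient.mk z := by
    simpa using hcoef 1 (by omega)
  -- tensor-level homogeneity of c 1
  have hhom : ∀ s : k, tmap k (scaleHomP k n (⟨i - 1, by omega⟩ : Fin n) s) (c 1) = s • c 1 := by
    intro s
    have hall : ∀ t : k, ∑ d ∈ range N, t ^ d • (tmap k (scaleHomP k n (⟨i - 1, by omega⟩ : Fin n) s) (c d)) =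
        ∑ d ∈ range N, t ^ d • (s ^ d • c d) := by
      intro t
      have h5 := hpad.2 t
      dsimp only at h5
      have h6 := hpad.2 (s * t)
      dsimp only at h6
      calc ∑ d ∈ range N, t ^ d • (tmap k (scaleHomP k n (⟨i - 1, by omega⟩ : Fin n) s) (c d))
          = tmap k (scaleHomP k n (⟨i - 1, by omega⟩ : Fin n) s) (∑ d ∈ range N, t ^ d • c d) := by
            rw [map_sum]
            exact Finset.sum_congr rfl fun d _ => (map_smul _ _ _).symm
        _ = tmap k (scaleHomP k n (⟨i - 1, by omega⟩ : Fin n) s) (tmap k (scaleHomP k n (⟨i - 1, by omega⟩ : Fin n) t) z) := by rw [← h5]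
        _ = tmap k (scaleHomP k n (⟨i - 1, by omega⟩ : Fin n) (s * t)) z := by rw [tmap_comp, scale_mul]
        _ = ∑ d ∈ range N, (s * t) ^ d • c d := h6
        _ = ∑ d ∈ range N, t ^ d • (s ^ d • c d) := by
            refine Finset.sum_congr rfl fun d _ => ?_
            rw [mul_pow, mul_comm, mul_smul]
    have h7 := poly_coeff_ext hall 1 (by omega)
    simpa using h7
  -- target setup
  have hab : (⟨i - 1, by omega⟩ : Fin (n + 1)) ≠ ⟨i, by omega⟩ := by
    simp [Fin.ext_iff]; omega
  obtain ⟨w, hwdef⟩ : ∃ w, w = tmap k (cofaceP k n ⟨i, by omega⟩) (c 1) := ⟨_, rfl⟩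
  have hdiag : ∀ t : k,
      tmap k (scaleHomP k (n + 1) ⟨i - 1, by omega⟩ t)
        (tmap k (scaleHomP k (n + 1) ⟨i, by omega⟩ t) w) = t • w := by
    intro t
    rw [hwdef, tmap_comp, tmap_comp, diag_coface k n i h1 h2 t, ← tmap_comp, hhom t, map_smul]
  -- 2D polynomial expansion
  obtain ⟨Nb, u, hu⟩ := scale_tensor_poly k (n + 1) ⟨i, by omega⟩ w
  have hva : ∀ e : ℕ, ∃ Na va, IsPolyFam Na va
      (fun s : k => tmap k (scaleHomP k (n + 1) ⟨i - 1, by omega⟩ s) (u e)) :=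
    fun e => scale_tensor_poly k (n + 1) _ (u e)
  choose Na va hvaP using hva
  obtain ⟨M, hM2, hMb, hMa⟩ : ∃ M, 2 ≤ M ∧ Nb ≤ M ∧ ∀ e, e < Nb → Na e ≤ M :=
    ⟨max (max 2 Nb) ((range Nb).sup Na),
      le_trans (le_max_left 2 Nb) (le_max_left _ _),
      le_trans (le_max_right 2 Nb) (le_max_left _ _),
      fun e he => le_trans (Finset.le_sup (Finset.mem_range.mpr he)) (le_max_right _ _)⟩
  set C : ℕ → ℕ → Lp k (n + 1) ⊗[k] Lp k (n + 1) :=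
    fun a' b' => if b' < Nb then va b' a' else 0 with hC
  have hCvan : ∀ a' b', M ≤ a' → C a' b' = 0 := by
    intro a' b' hMa'
    rw [hC]
    dsimp only
    split
    · next hb => exact (hvaP b').1 a' (le_trans (hMa b' hb) hMa')
    · rfl
  have hCvan' : ∀ a' b', M ≤ b' → C a' b' = 0 := by
    intro a' b' hMb'
    have hnb : ¬ (b' < Nb) := fun hcon => absurd (lt_of_lt_of_le hcon (le_trans hMb hMb'))
      (lt_irrefl b')
    rw [hC]
    dsimp only
    rw [if_neg hnb]
  have hexp : ∀ s t : k,
      tmap k (scaleHomP k (n + 1) ⟨i - 1, by omega⟩ s)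
        (tmap k (scaleHomP k (n + 1) ⟨i, by omega⟩ t) w) =
      ∑ b' ∈ range M, t ^ b' • (∑ a' ∈ range M, s ^ a' • C a' b') := by
    intro s t
    have h8 := (hu.pad hMb).2 t
    dsimp only at h8
    rw [h8, map_sum]
    refine Finset.sum_congr rfl fun b' hb' => ?_
    rw [map_smul]
    congr 1
    by_cases hbN : b' < Nb
    · have h9 := ((hvaP b').pad (hMa b' hbN)).2 s
      dsimp only at h9
      rw [h9]
      refine Finset.sum_congr rfl fun a' _ => ?_
      rw [hC]
      dsimp only
      rw [if_pos hbN]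
    · have h10 : u b' = 0 := hu.1 b' (by omega)
      rw [h10, map_zero]
      refine (Finset.sum_eq_zero fun a' _ => ?_).symm
      rw [hC]
      dsimp only
      rw [if_neg hbN, smul_zero]
  -- the key relation g(s, s*t) = s • g(1, t)
  have hrel : ∀ s t : k,
      ∑ b' ∈ range M, (s * t) ^ b' • (∑ a' ∈ range M, s ^ a' • C a' b')
      = s • ∑ b' ∈ range M, t ^ b' • (∑ a' ∈ range M, C a' b') := by
    intro s t
    have e1 : tmap k (scaleHomP k (n + 1) ⟨i, by omega⟩ t)
        (tmap k (scaleHomP k (n + 1) ⟨i - 1, by omega⟩ s)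
          (tmap k (scaleHomP k (n + 1) ⟨i, by omega⟩ s) w)) =
        tmap k (scaleHomP k (n + 1) ⟨i - 1, by omega⟩ s)
          (tmap k (scaleHomP k (n + 1) ⟨i, by omega⟩ (s * t)) w) := by
      rw [tmap_comp, tmap_comp, tmap_comp, scale_swap_mul k (n + 1) _ _ hab s t]
    have e2 : tmap k (scaleHomP k (n + 1) ⟨i, by omega⟩ t) w =
        ∑ b' ∈ range M, t ^ b' • (∑ a' ∈ range M, C a' b') := by
      have h11 := hexp 1 t
      rw [scale_one, tmap_id] at h11
      rw [h11]
      refine Finset.sum_congr rfl fun b' _ => ?_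
      congr 1
      exact Finset.sum_congr rfl fun a' _ => by rw [one_pow, one_smul]
    calc ∑ b' ∈ range M, (s * t) ^ b' • (∑ a' ∈ range M, s ^ a' • C a' b')
        = tmap k (scaleHomP k (n + 1) ⟨i - 1, by omega⟩ s)
            (tmap k (scaleHomP k (n + 1) ⟨i, by omega⟩ (s * t)) w) := (hexp s (s * t)).symm
      _ = tmap k (scaleHomP k (n + 1) ⟨i, by omega⟩ t)
            (tmap k (scaleHomP k (n + 1) ⟨i - 1, by omega⟩ s)
              (tmap k (scaleHomP k (n + 1) ⟨i, by omega⟩ s) w)) := e1.symm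
      _ = tmap k (scaleHomP k (n + 1) ⟨i, by omega⟩ t) (s • w) := by rw [hdiag s]
      _ = s • tmap k (scaleHomP k (n + 1) ⟨i, by omega⟩ t) w := map_smul _ _ _
      _ = s • ∑ b' ∈ range M, t ^ b' • (∑ a' ∈ range M, C a' b') := by rw [e2]
  -- extract: C a' b' = 0 unless a' + b' = 1
  have hC0 : ∀ a' b', b' < M → a' + b' ≠ 1 → C a' b' = 0 := by
    have hstep1 : ∀ s : k, ∀ b' < M,
        ∑ a' ∈ range M, s ^ (a' + b') • C a' b' = s • ∑ a' ∈ range M, C a' b' := by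
      intro s b' hb'
      have h12 : ∀ t : k,
          ∑ b'' ∈ range M, t ^ b'' • (s ^ b'' • ∑ a' ∈ range M, s ^ a' • C a' b'')
          = ∑ b'' ∈ range M, t ^ b'' • (s • ∑ a' ∈ range M, C a' b'') := by
        intro t
        calc ∑ b'' ∈ range M, t ^ b'' • (s ^ b'' • ∑ a' ∈ range M, s ^ a' • C a' b'')
            = ∑ b'' ∈ range M, (s * t) ^ b'' • (∑ a' ∈ range M, s ^ a' • C a' b'') := by
              refine Finset.sum_congr rfl fun b'' _ => ?_
              rw [mul_pow, mul_comm, mul_smul]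
          _ = s • ∑ b'' ∈ range M, t ^ b'' • (∑ a' ∈ range M, C a' b'') := hrel s t
          _ = ∑ b'' ∈ range M, t ^ b'' • (s • ∑ a' ∈ range M, C a' b'') := by
              rw [Finset.smul_sum]
              exact Finset.sum_congr rfl fun b'' _ => smul_comm _ _ _
      have h14 := poly_coeff_ext h12 b' hb'
      calc ∑ a' ∈ range M, s ^ (a' + b') • C a' b'
          = s ^ b' • ∑ a' ∈ range M, s ^ a' • C a' b' := by
            rw [Finset.smul_sum]
            refine Finset.sum_congr rfl fun a' _ => ?_
            rw [smul_smul, ← pow_add, Nat.add_comm b' a']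
        _ = s • ∑ a' ∈ range M, C a' b' := h14
    intro a' b' hb' hne
    by_cases haM : M ≤ a'
    · exact hCvan a' b' haM
    have hshift : ∀ s : k, ∑ p ∈ range (M + M), s ^ p •
        (if b' ≤ p ∧ p - b' < M then C (p - b') b' else 0) =
        ∑ a'' ∈ range M, s ^ (a'' + b') • C a'' b' := by
      intro s
      rw [show M + M = b' + (M + M - b') by omega, Finset.sum_range_add]
      have hz : ∑ p ∈ range b', s ^ p •
          (if b' ≤ p ∧ p - b' < M then C (p - b') b' else 0) = 0 :=
        Finset.sum_eq_zero fun p hp => by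
          rw [if_neg (by simp only [Finset.mem_range] at hp; omega), smul_zero]
      rw [hz, zero_add]
      have he : ∀ x, (if b' ≤ b' + x ∧ (b' + x) - b' < M then C ((b' + x) - b') b' else 0) =
          (if x < M then C x b' else 0) := by
        intro x
        by_cases hx : x < M
        · rw [if_pos (by omega), if_pos hx, show b' + x - b' = x by omega]
        · rw [if_neg (by omega), if_neg hx]
      have hsub : ∑ x ∈ range M, s ^ (b' + x) • (if x < M then C x b' else 0) =
          ∑ x ∈ range (M + M - b'), s ^ (b' + x) • (if x < M then C x b' else 0) :=
        Finset.sum_subset (Finset.range_subset_range.mpr (by omega)) (fun x _ hx => by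
          rw [if_neg (by simp only [Finset.mem_range] at hx; omega), smul_zero])
      calc ∑ x ∈ range (M + M - b'), s ^ (b' + x) •
            (if b' ≤ b' + x ∧ (b' + x) - b' < M then C ((b' + x) - b') b' else 0)
          = ∑ x ∈ range (M + M - b'), s ^ (b' + x) • (if x < M then C x b' else 0) :=
            Finset.sum_congr rfl fun x _ => by rw [he x]
        _ = ∑ x ∈ range M, s ^ (b' + x) • (if x < M then C x b' else 0) := hsub.symm
        _ = ∑ a'' ∈ range M, s ^ (a'' + b') • C a'' b' := by
            refine Finset.sum_congr rfl fun x hx => ?_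
            rw [if_pos (Finset.mem_range.mp hx), Nat.add_comm b' x]
    have hpoly2 : ∀ s : k, ∑ p ∈ range (M + M), s ^ p •
        (if b' ≤ p ∧ p - b' < M then C (p - b') b' else 0)
        = ∑ p ∈ range (M + M), s ^ p •
          (if p = 1 then (∑ a'' ∈ range M, C a'' b') else 0) := by
      intro s
      rw [hshift s, hstep1 s b' hb']
      symm
      have h15 : ∀ p ∈ range (M + M), s ^ p •
          (if p = 1 then (∑ a'' ∈ range M, C a'' b') else 0) =
          (if p = 1 then s ^ p • (∑ a'' ∈ range M, C a'' b') else 0) := fun p _ => by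
        split <;> simp
      rw [Finset.sum_congr rfl h15, Finset.sum_ite_eq', if_pos (by simp only [Finset.mem_range]; omega), pow_one]
    have h16 := poly_coeff_ext hpoly2 (a' + b') (by omega)
    rw [if_pos ⟨by omega, by omega⟩, if_neg hne, show a' + b' - b' = a' by omega] at h16
    exact h16
  -- evaluate the specializations
  have hsum2 : ∀ g : ℕ → Lp k (n + 1) ⊗[k] Lp k (n + 1), (∀ b'', 2 ≤ b'' → g b'' = 0) →
      ∑ b'' ∈ range M, g b'' = g 0 + g 1 := by
    intro g hg
    have h20 : ∑ b'' ∈ range 2, g b'' = ∑ b'' ∈ range M, g b'' :=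
      Finset.sum_subset (Finset.range_subset_range.mpr hM2) (fun x _ hx =>
        hg x (by simp only [Finset.mem_range] at hx; omega))
    rw [← h20, Finset.sum_range_succ, Finset.sum_range_one]
  have hin : ∀ b'' < M, ∑ a'' ∈ range M, C a'' b'' =
      (if b'' = 0 then C 1 0 else if b'' = 1 then C 0 1 else 0) := by
    intro b'' hb''
    by_cases h0 : b'' = 0
    · subst h0
      rw [if_pos rfl]
      exact Finset.sum_eq_single_of_mem 1 (by simp only [Finset.mem_range]; omega)
        (fun x _ hx => hC0 x 0 hb'' (by omega))
    by_cases h1' : b'' = 1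
    · subst h1'
      rw [if_neg (by omega), if_pos rfl]
      exact Finset.sum_eq_single_of_mem 0 (by simp only [Finset.mem_range]; omega)
        (fun x _ hx => hC0 x 1 hb'' (by omega))
    · rw [if_neg h0, if_neg h1']
      exact Finset.sum_eq_zero fun x _ => hC0 x b'' hb'' (by omega)
  have hw_eval : w = C 1 0 + C 0 1 := by
    have h17 := hexp 1 1
    rw [scale_one, tmap_id, scale_one, tmap_id] at h17
    rw [h17]
    have h21 : ∀ b'' ∈ range M, (1 : k) ^ b'' • (∑ a'' ∈ range M, (1 : k) ^ a'' • C a'' b'') =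
        ∑ a'' ∈ range M, C a'' b'' := by
      intro b'' _
      simp only [one_pow, one_smul]
    rw [Finset.sum_congr rfl h21]
    rw [hsum2 _ (fun b'' h2b => ?_), hin 0 (by omega), hin 1 (by omega)]
    · simp
    · by_cases hbM : b'' < M
      · rw [hin b'' hbM, if_neg (by omega), if_neg (by omega)]
      · exact Finset.sum_eq_zero fun x _ => hCvan' x b'' (by omega)
  have hth : tmap k (scaleHomP k (n + 1) ⟨i, by omega⟩ 0) w = C 1 0 := by
    have h18 := hexp 1 0
    rw [scale_one, tmap_id] at h18
    rw [h18, eval_zero_sum (by omega)]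
    have h22 : ∑ a'' ∈ range M, (1 : k) ^ a'' • C a'' 0 = ∑ a'' ∈ range M, C a'' 0 := by
      simp only [one_pow, one_smul]
    rw [h22, hin 0 (by omega), if_pos rfl]
  have hps : tmap k (scaleHomP k (n + 1) ⟨i - 1, by omega⟩ 0) w = C 0 1 := by
    have h19 := hexp 0 1
    rw [scale_one, tmap_id] at h19
    rw [h19]
    have h23 : ∀ b'' ∈ range M, (1 : k) ^ b'' • (∑ a'' ∈ range M, (0 : k) ^ a'' • C a'' b'') =
        C 0 b'' := by
      intro b'' _
      rw [one_pow, one_smul, eval_zero_sum (by omega)]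
    rw [Finset.sum_congr rfl h23]
    exact Finset.sum_eq_single_of_mem 1 (by simp only [Finset.mem_range]; omega)
      (fun x hx hx1 => hC0 0 x (Finset.mem_range.mp hx) (by omega))
  -- pass to the quotient
  have hmkth : (Submodule.Quotient.mk (tmap k (scaleHomP k (n + 1) ⟨i, by omega⟩ 0) w) :
      FF k (Lp k (n + 1))) = Fmap (tauP k n i) (Submodule.Quotient.mk z) := by
    rw [hwdef, tmap_comp, theta_coface k n i h1 h2, ← Fmap_mk, hz1]
  have hmkps : (Submodule.Quotient.mk (tmap k (scaleHomP k (n + 1) ⟨i - 1, by omega⟩ 0) w) :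
      FF k (Lp k (n + 1))) = Fmap (tauP k n (i - 1)) (Submodule.Quotient.mk z) := by
    rw [hwdef, tmap_comp, psi_coface k n i h1 h2, ← Fmap_mk, hz1]
  have hmain : Fmap (cofaceP k n ⟨i, by omega⟩) (Submodule.Quotient.mk z) =
      (Submodule.Quotient.mk w : FF k (Lp k (n + 1))) := by
    have h24 := Fmap_mk k (cofaceP k n ⟨i, by omega⟩) (c 1)
    rw [hz1] at h24
    exact h24.trans (congrArg _ hwdef.symm)
  rw [hmain, ← hmkps, ← hmkth, hth, hps, hw_eval, Submodule.Quotient.mk_add]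
  exact add_comm _ _

end Key



/-- every element `α ∈ H'_n ⊆ F'_n` (multilinear in `x_1,…,x_n` and
alternating under their permutations) satisfies `δ α = 0` in `F'_{n+1}`. -/
theorem statement_6 (k : Type*) [Field k] [CharZero k] (n : ℕ)
    (α : FF k (Lp k n)) (hα : α ∈ HsubP k n) :
    cosimpP k n α = 0 := by
  have hm : ∀ (j : Fin n) (t : k), Fmap (scaleHomP k n j t) α = t • α := by
    intro j t
    have h0 := (Submodule.mem_inf.mp hα).1
    have h1 := (Submodule.mem_iInf _).mp h0 j
    have h2 := (Submodule.mem_iInf _).mp h1 t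
    rw [LinearMap.mem_ker, LinearMap.sub_apply, LinearMap.smul_apply, LinearMap.id_apply,
      sub_eq_zero] at h2
    exact h2
  set G : ℕ → FF k (Lp k (n + 1)) := fun m => Fmap (tauP k n m) α with hG
  have hsum : cosimpP k n α = ∑ i ∈ range (n + 2), (-1 : k) ^ i •
      (if i = 0 then G 0 else if i = n + 1 then G n else G (i - 1) + G i) := by
    rw [cosimpP, LinearMap.sum_apply, ← Fin.sum_univ_eq_sum_range]
    refine Finset.sum_congr rfl fun i _ => ?_
    rw [LinearMap.smul_apply]
    congr 1
    by_cases h0' : (i : ℕ) = 0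
    · rw [if_pos h0', show i = 0 from by simp [Fin.ext_iff, h0']]
      rw [show cofaceP k n 0 = tauP k n 0 from coface_zero k n, hG]
    by_cases hlast : (i : ℕ) = n + 1
    · rw [if_neg h0', if_pos hlast,
        show i = Fin.last (n + 1) from by simp [Fin.ext_iff, hlast],
        show cofaceP k n (Fin.last (n + 1)) = tauP k n n from coface_last k n, hG]
    · rw [if_neg h0', if_neg hlast]
      have h1i : 1 ≤ (i : ℕ) := by omega
      have h2i : (i : ℕ) ≤ n := by have := i.isLt; omega
      have hkey := key_split n (i : ℕ) h1i h2i α (hm ⟨(i : ℕ) - 1, by omega⟩)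
      rw [hG]
      exact hkey
  have htel : ∀ m, m ≤ n → ∑ i ∈ range (m + 1), (-1 : k) ^ i •
      (if i = 0 then G 0 else if i = n + 1 then G n else G (i - 1) + G i) =
      (-1 : k) ^ m • G m := by
    intro m
    induction m with
    | zero => intro _; simp
    | succ p ih =>
      intro hp
      rw [Finset.sum_range_succ, ih (by omega), if_neg (by omega), if_neg (by omega)]
      have hps : p + 1 - 1 = p := by omega
      rw [hps, pow_succ, smul_add, mul_neg_one, neg_smul, neg_smul]
      abel
  rw [hsum, Finset.sum_range_succ, htel n le_rfl, if_neg (by omega), if_pos rfl, pow_succ,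
    mul_neg_one, neg_smul]
  abel
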